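/- Let f : [0,∞) → [0,∞) be continuous and strictly decreasing, with limit f(∞) := lim_{x→∞} f(x). Let s satisfy 1 < s and s·f(∞) < f(0), let x₀ be the unique point with f(x₀) = f(0)/s, and suppose g : [x₀, ∞) → [0,∞) satisfies f(g(x)) = s·f(x) for every x ≥ x₀ and g is convex on [x₀, ∞). Then f(∞) = 0. -/

import Mathlib

open Set Filter

/-- **A decreasing function with a convex `f⁻¹ ∘ (s·f)` tends to zero** (Proposition 8).
Let `f : [0,∞) → [0,∞)` be continuous and strictly decreasing with limit `L` at `+∞`.
Let `1 < s` with `s·L < f 0`, let `x₀` be the unique point with `f x₀ = f 0 / s`, and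
suppose `g : [x₀, ∞) → [0,∞)` satisfies `f (g x) = s · f x` for every `x ≥ x₀` and is
convex on `[x₀, ∞)`. Then `L = 0`. -/
theorem decreasing_convex_conjugate_tendsto_zero
    (f : ℝ → ℝ) (L : ℝ)
    (hf_cont : ContinuousOn f (Ici (0 : ℝ)))
    (hf_anti : StrictAntiOn f (Ici (0 : ℝ)))
    (hf_nonneg : ∀ x : ℝ, 0 ≤ x → 0 ≤ f x)
    (hL : Tendsto f atTop (nhds L))
    (s : ℝ) (hs : 1 < s) (hsL : s * L < f 0)
    (x₀ : ℝ) (hx₀_nonneg : 0 ≤ x₀) (hx₀_spec : f x₀ = f 0 / s)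
    (g : ℝ → ℝ)
    (hg_nonneg : ∀ x : ℝ, x₀ ≤ x → 0 ≤ g x)
    (hg_spec : ∀ x : ℝ, x₀ ≤ x → f (g x) = s * f x)
    (hg_convex : ConvexOn ℝ (Ici x₀) g) :
    L = 0 := by
  by_contra hL0
  -- L ≥ 0
  have hL_nonneg : 0 ≤ L := by
    refine ge_of_tendsto hL ?_
    filter_upwards [eventually_ge_atTop (0 : ℝ)] with y hy
    exact hf_nonneg y hy
  have hLpos : 0 < L := lt_of_le_of_ne hL_nonneg (Ne.symm hL0)
  have hs0 : (0 : ℝ) < s := lt_trans one_pos hs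
  -- f x ≥ L on [0, ∞)
  have hfL : ∀ x : ℝ, 0 ≤ x → L ≤ f x := by
    intro x hx
    refine le_of_tendsto hL ?_
    filter_upwards [eventually_ge_atTop x] with y hy
    exact hf_anti.antitoneOn hx (le_trans hx hy) hy
  -- find d ≥ 0 with f d < s * L
  have hev : ∀ᶠ y in atTop, f y < s * L := by
    have : L < s * L := by nlinarith
    exact hL.eventually_lt_const this
  obtain ⟨d, hd_lt, hd_nonneg⟩ := (hev.and (eventually_ge_atTop (0 : ℝ))).exists
  -- g is bounded above by d on [x₀, ∞)
  have hgd : ∀ x : ℝ, x₀ ≤ x → g x < d := by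
    intro x hx
    by_contra h
    push_neg at h
    have h1 : f (g x) ≤ f d := by
      rcases eq_or_lt_of_le h with h' | h'
      · rw [h']
      · exact le_of_lt (hf_anti hd_nonneg (hg_nonneg x hx) h')
    have h2 : s * L ≤ f (g x) := by
      rw [hg_spec x hx]
      have := hfL x (le_trans hx₀_nonneg hx)
      nlinarith
    linarith
  -- g x₀ = 0
  have hgx₀ : g x₀ = 0 := by
    have h1 : f (g x₀) = f 0 := by
      rw [hg_spec x₀ le_rfl, hx₀_spec]
      field_simp
    exact hf_anti.injOn (hg_nonneg x₀ le_rfl) (self_mem_Ici) h1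
  -- g ≤ 0 on [x₀, ∞) by convexity and boundedness
  have hgle : ∀ x : ℝ, x₀ ≤ x → g x ≤ 0 := by
    intro x hx
    rcases eq_or_lt_of_le hx with h | h
    · rw [← h, hgx₀]
    by_contra hpos
    push_neg at hpos
    have hxd : g x < d := hgd x hx
    have hd1 : (0:ℝ) < d + 1 := by linarith
    set y := x₀ + (x - x₀) * (d + 1) / g x with hy_def
    have hxx₀ : 0 < x - x₀ := by linarith
    have hyx₀ : y - x₀ = (x - x₀) * (d + 1) / g x := by rw [hy_def]; ring
    have hyx₀pos : 0 < y - x₀ := by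
      rw [hyx₀]; positivity
    have hyx : x < y := by
      have : (x - x₀) < (x - x₀) * (d + 1) / g x := by
        rw [lt_div_iff₀ hpos]
        nlinarith
      linarith [hyx₀ ▸ this]
    have hy_mem : y ∈ Ici x₀ := by
      simp only [mem_Ici]; linarith
    set a := (y - x) / (y - x₀) with ha_def
    set b := (x - x₀) / (y - x₀) with hb_def
    have ha : 0 ≤ a := by apply div_nonneg <;> linarith
    have hb : 0 ≤ b := by apply div_nonneg <;> linarith
    have hab : a + b = 1 := by
      rw [ha_def, hb_def, ← add_div, div_eq_one_iff_eq (by linarith)]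
      ring
    have hcomb : a • x₀ + b • y = x := by
      rw [ha_def, hb_def]
      simp only [smul_eq_mul]
      field_simp
      ring
    have hconv := hg_convex.2 (self_mem_Ici) hy_mem ha hb hab
    rw [hcomb, hgx₀] at hconv
    simp only [smul_eq_mul, mul_zero, zero_add] at hconv
    -- hconv : g x ≤ b * g y
    have hbval : b = g x / (d + 1) := by
      rw [hb_def, hyx₀]
      rw [div_div_eq_mul_div, mul_div_mul_left _ _ (ne_of_gt hxx₀)]
    rw [hbval] at hconv
    have hgy : d + 1 ≤ g y := by
      rw [div_mul_eq_mul_div, le_div_iff₀ hd1] at hconv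
      nlinarith
    have := hgd y (le_trans hx (le_of_lt hyx))
    linarith
  -- hence g ≡ 0 on [x₀, ∞), so f is constant there: contradiction
  have hgz : ∀ x : ℝ, x₀ ≤ x → g x = 0 := fun x hx =>
    le_antisymm (hgle x hx) (hg_nonneg x hx)
  have h1 : f 0 = s * f x₀ := by rw [← hgz x₀ le_rfl, hg_spec x₀ le_rfl]
  have h2 : f 0 = s * f (x₀ + 1) := by
    rw [← hgz (x₀ + 1) (by linarith), hg_spec (x₀ + 1) (by linarith)]
  have h3 : f (x₀ + 1) < f x₀ :=
    hf_anti hx₀_nonneg (by simp only [mem_Ici]; linarith) (by linarith)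
  nlinarith
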